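/- Fix a period p and an interval I. Every I-local maximal p-periodic crossing interval of length at least 2p is uniquely determined by a maximal p-good block of length at least p intersecting the window W_p = [m-p+1, m]; consequently, for each fixed p there are at most 2 such candidates. -/
import Mathlib


open scoped Classical

private def Cand {α : Type*} (w : ℕ → α) (b e m p i j : ℕ) : Prop :=
  b ≤ i ∧ i ≤ e ∧ b ≤ j ∧ j ≤ e ∧ i ≤ m ∧ m < j ∧ 2 * p ≤ j - i + 1 ∧
  (∀ t, i ≤ t → t + p ≤ j → w t = w (t + p)) ∧
  (i = b ∨ w (i - 1) ≠ w (i - 1 + p)) ∧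
  (j = e ∨ w (j + 1 - p) ≠ w (j + 1))

private lemma cand_step {α : Type*} {w : ℕ → α} {b e m p i j i' j' : ℕ}
    (hp : 1 ≤ p) (h1 : Cand w b e m p i j) (h2 : Cand w b e m p i' j')
    (hii : i < i') : j < j' ∧ j + 2 ≤ i' + p := by
  obtain ⟨hbi, hie, hbj, hje, him, hmj, hlen, hper, hL, hR⟩ := h1
  obtain ⟨hbi', hie', hbj', hje', him', hmj', hlen', hper', hL', hR'⟩ := h2
  have hij : i + 2 * p ≤ j + 1 := by omega
  have hij' : i' + 2 * p ≤ j' + 1 := by omega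
  have hjj : j < j' := by
    by_contra h'
    push_neg at h'
    have hib : i' ≠ b := by omega
    have hne : w (i' - 1) ≠ w (i' - 1 + p) := hL'.resolve_left hib
    exact hne (hper (i' - 1) (by omega) (by omega))
  refine ⟨hjj, ?_⟩
  have hjne : j ≠ e := by omega
  have hne : w (j + 1 - p) ≠ w (j + 1) := hR.resolve_left hjne
  by_contra h'
  push_neg at h'
  have hi' : i' ≤ j + 1 - p := by omega
  have := hper' (j + 1 - p) hi' (by omega)
  rw [show j + 1 - p + p = j + 1 by omega] at this
  exact hne this

private lemma cand_same_left {α : Type*} {w : ℕ → α} {b e m p i j j' : ℕ}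
    (hp : 1 ≤ p) (h1 : Cand w b e m p i j) (h2 : Cand w b e m p i j')
    (hjj : j < j') : False := by
  obtain ⟨hbi, hie, hbj, hje, him, hmj, hlen, hper, hL, hR⟩ := h1
  obtain ⟨hbi', hie', hbj', hje', him', hmj', hlen', hper', hL', hR'⟩ := h2
  have hij : i + 2 * p ≤ j + 1 := by omega
  have hjne : j ≠ e := by omega
  have hne : w (j + 1 - p) ≠ w (j + 1) := hR.resolve_left hjne
  have := hper' (j + 1 - p) (by omega) (by omega)
  rw [show j + 1 - p + p = j + 1 by omega] at this
  exact hne this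

private lemma cand_three {α : Type*} {w : ℕ → α} {b e m p i1 j1 i2 j2 i3 j3 : ℕ}
    (hp : 1 ≤ p) (h1 : Cand w b e m p i1 j1) (h2 : Cand w b e m p i2 j2)
    (h3 : Cand w b e m p i3 j3) (h12 : i1 < i2) (h23 : i2 < i3) : False := by
  obtain ⟨hA, hB⟩ := cand_step hp h1 h2 h12
  obtain ⟨hC, hD⟩ := cand_step hp h2 h3 h23
  obtain ⟨_, _, _, _, _, hmj1, hlen1, _, _, _⟩ := h1
  obtain ⟨_, _, _, _, him2, hmj2, hlen2, _, _, _⟩ := h2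
  obtain ⟨_, _, _, _, him3, hmj3, hlen3, _, _, _⟩ := h3
  -- j1 > m, so i2 + p ≥ m + 3; then j2 ≥ i2 + 2p - 1 ≥ m + p + 2;
  -- then i3 + p ≥ j2 + 2 ≥ m + p + 4, so i3 > m, contradiction.
  omega

/-- For `I = [b,e]` with split point `m = ⌊(b+e)/2⌋` and a fixed period `p`,
there are at most two `I`-local maximal `p`-periodic crossing intervals of
length at least `2p` (each is determined by a maximal `p`-good block of length
at least `p` intersecting the window `W_p = [m-p+1, m]`). -/
theorem local_crossing_candidates_at_most_two {α : Type*} (w : ℕ → α)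
    (b e m p : ℕ) (hm : m = (b + e) / 2) (hp : 1 ≤ p) (hpI : 2 * p ≤ e - b + 1) :
    (((Finset.Icc b e) ×ˢ (Finset.Icc b e)).filter
      (fun q : ℕ × ℕ =>
        q.1 ≤ m ∧ m < q.2 ∧ 2 * p ≤ q.2 - q.1 + 1 ∧
        (∀ t, q.1 ≤ t → t + p ≤ q.2 → w t = w (t + p)) ∧
        (q.1 = b ∨ w (q.1 - 1) ≠ w (q.1 - 1 + p)) ∧
        (q.2 = e ∨ w (q.2 + 1 - p) ≠ w (q.2 + 1)))).card ≤ 2 := by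
  by_contra hcard
  push_neg at hcard
  rw [Finset.two_lt_card_iff] at hcard
  obtain ⟨q, r, s, hq, hr, hs, hqr, hqs, hrs⟩ := hcard
  have hc : ∀ x : ℕ × ℕ,
      x ∈ (((Finset.Icc b e) ×ˢ (Finset.Icc b e)).filter
        (fun q : ℕ × ℕ =>
          q.1 ≤ m ∧ m < q.2 ∧ 2 * p ≤ q.2 - q.1 + 1 ∧
          (∀ t, q.1 ≤ t → t + p ≤ q.2 → w t = w (t + p)) ∧
          (q.1 = b ∨ w (q.1 - 1) ≠ w (q.1 - 1 + p)) ∧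
          (q.2 = e ∨ w (q.2 + 1 - p) ≠ w (q.2 + 1)))) →
      Cand w b e m p x.1 x.2 := by
    intro x hx
    simp only [Finset.mem_filter, Finset.mem_product, Finset.mem_Icc] at hx
    obtain ⟨⟨⟨h1, h2⟩, h3, h4⟩, h5, h6, h7, h8, h9, h10⟩ := hx
    exact ⟨h1, h2, h3, h4, h5, h6, h7, h8, h9, h10⟩
  have Hq := hc q hq
  have Hr := hc r hr
  have Hs := hc s hs
  -- if two have equal first components, they are equal
  have eqfst : ∀ x y : ℕ × ℕ, Cand w b e m p x.1 x.2 → Cand w b e m p y.1 y.2 →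
      x.1 = y.1 → x = y := by
    intro x y hx hy hxy
    rcases lt_trichotomy x.2 y.2 with h | h | h
    · exact absurd (cand_same_left hp hx (hxy ▸ hy) h) (fun a => a)
    · exact Prod.ext hxy h
    · exact absurd (cand_same_left hp (hxy ▸ hy) hx h) (fun a => a)
  have hqr1 : q.1 ≠ r.1 := fun h => hqr (eqfst q r Hq Hr h)
  have hqs1 : q.1 ≠ s.1 := fun h => hqs (eqfst q s Hq Hs h)
  have hrs1 : r.1 ≠ s.1 := fun h => hrs (eqfst r s Hr Hs h)
  rcases lt_trichotomy q.1 r.1 with h1 | h1 | h1 <;>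
  rcases lt_trichotomy r.1 s.1 with h2 | h2 | h2 <;>
  rcases lt_trichotomy q.1 s.1 with h3 | h3 | h3 <;>
  first
    | exact hqr1 h1 | exact hrs1 h2 | exact hqs1 h3
    | exact cand_three hp Hq Hr Hs h1 h2
    | exact cand_three hp Hq Hs Hr h3 (by omega)
    | exact cand_three hp Hr Hq Hs (by omega) (by omega)
    | exact cand_three hp Hr Hs Hq h2 (by omega)
    | exact cand_three hp Hs Hq Hr (by omega) (by omega)
    | exact cand_three hp Hs Hr Hq (by omega) (by omega)
    | omega
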